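/- Let n ≥ 1, s ∈ (0, n/2), and let C₁ > 0. Suppose H : ℝⁿ → (0,∞) is C¹ with ‖H‖_{C^{0,γ}(ℝⁿ)} ≤ C₁, |∇H(x)| ≤ C₁ H(x) for all x, and H(x)/H(y) ≤ C₁ whenever |x - y| < 1. Let f : [0,∞) → [0,∞) be continuous with f(t) t^{-(n+2s)/(n-2s)} nonincreasing and positive on (0,∞), and satisfying the Lipschitz-type condition |f(t) - f(r)| ≤ C(t^μ + t^{p-1})(t-r) for 0 ≤ r < t, where 1 < p < (n+2s)/(n-2s) and 0 < μ ≤ p - 1. Then for every nonnegative v ∈ C^{0,γ}(ℝⁿ), the function x ↦ H(x)^{(n+2s)/(n-2s)} f(H(x)^{-1} v(x)) belongs to C^{0,γ}(ℝⁿ), with Hölder norm bounded by a constant depending only on C₁, f, and ‖v‖_{C^{0,γ}(ℝⁿ)}. -/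

import Mathlib

lemma aux_rpow_tangent {q a b : ℝ} (hq : 1 ≤ q) (hb : 0 < b) (hab : b ≤ a) :
    a ^ q - b ^ q ≤ q * a ^ (q - 1) * (a - b) := by
  have ha : 0 < a := hb.trans_le hab
  have hs : (-1 : ℝ) ≤ b / a - 1 := by
    have : (0:ℝ) ≤ b / a := by positivity
    linarith
  have hB := one_add_mul_self_le_rpow_one_add hs hq
  rw [show (1 : ℝ) + (b / a - 1) = b / a by ring] at hB
  have hda : (b / a) ^ q = b ^ q / a ^ q := Real.div_rpow hb.le ha.le q
  have haq : 0 < a ^ q := Real.rpow_pos_of_pos ha q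
  have h2 : (1 + q * (b / a - 1)) * a ^ q ≤ b ^ q := by
    have := mul_le_mul_of_nonneg_right hB haq.le
    rwa [hda, div_mul_cancel₀ _ haq.ne'] at this
  have hq1 : a ^ (q - 1) = a ^ q / a := Real.rpow_sub_one ha.ne' q
  have key : (1 + q * (b / a - 1)) * a ^ q = a ^ q - q * a ^ (q - 1) * (a - b) := by
    rw [hq1]; field_simp; ring
  linarith [key ▸ h2]

lemma aux_abs_rpow_sub {q a b K : ℝ} (hq : 1 ≤ q) (ha : 0 < a) (hb : 0 < b)
    (hKa : a ≤ K) (hKb : b ≤ K) :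
    |a ^ q - b ^ q| ≤ q * K ^ (q - 1) * |a - b| := by
  have hK : 0 < K := ha.trans_le hKa
  rcases le_total b a with h | h
  · have h1 := aux_rpow_tangent hq hb h
    have h2 : a ^ (q - 1) ≤ K ^ (q - 1) := Real.rpow_le_rpow ha.le hKa (by linarith)
    have h3 : b ^ q ≤ a ^ q := Real.rpow_le_rpow hb.le h (by linarith)
    rw [abs_of_nonneg (by linarith), abs_of_nonneg (by linarith)]
    calc a ^ q - b ^ q ≤ q * a ^ (q - 1) * (a - b) := h1
      _ ≤ q * K ^ (q - 1) * (a - b) := by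
          have : (0:ℝ) ≤ a - b := by linarith
          exact mul_le_mul_of_nonneg_right (mul_le_mul_of_nonneg_left h2 (by linarith)) this
  · have h1 := aux_rpow_tangent hq ha h
    have h2 : b ^ (q - 1) ≤ K ^ (q - 1) := Real.rpow_le_rpow hb.le hKb (by linarith)
    have h3 : a ^ q ≤ b ^ q := Real.rpow_le_rpow ha.le h (by linarith)
    rw [abs_of_nonpos (by linarith), abs_of_nonpos (by linarith)]
    calc -(a ^ q - b ^ q) = b ^ q - a ^ q := by ring
      _ ≤ q * b ^ (q - 1) * (b - a) := h1
      _ ≤ q * K ^ (q - 1) * (b - a) := by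
          have : (0:ℝ) ≤ b - a := by linarith
          exact mul_le_mul_of_nonneg_right (mul_le_mul_of_nonneg_left h2 (by linarith)) this
      _ = q * K ^ (q - 1) * -(a - b) := by ring

set_option maxHeartbeats 1000000 in
/-- Lemma 4.3(i): Hölder regularity of the conformally transformed nonlinearity. With
`q = (n+2s)/(n-2s)`, if `H > 0` is `C¹` with `C^{0,γ}`-norm bounded by `C₁`,
`|∇H| ≤ C₁ H`, and `H(x)/H(y) ≤ C₁` for `|x-y| < 1`, and `f : [0,∞) → [0,∞)` is
continuous with `f(t)t^{-q}` nonincreasing and positive on `(0,∞)` and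
`|f(t)-f(r)| ≤ C(t^μ + t^{p-1})(t-r)` for `0 ≤ r < t`, then for nonnegative
`v ∈ C^{0,γ}(ℝⁿ)` the function `x ↦ H(x)^q f(H(x)⁻¹ v(x))` is in `C^{0,γ}(ℝⁿ)` with a
bound depending only on `C₁`, `f` and the `C^{0,γ}` data of `v`. -/
theorem stmt14 (n : ℕ) (hn : 1 ≤ n) (s γ : ℝ) (hs : 0 < s) (hsn : 2 * s < (n : ℝ))
    (hγ0 : 0 < γ) (hγ1 : γ < 1) (C₁ : ℝ) (hC₁ : 0 < C₁)
    (H : EuclideanSpace ℝ (Fin n) → ℝ) (hHpos : ∀ x, 0 < H x)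
    (hHdiff : ContDiff ℝ 1 H)
    (hHbd : ∀ x, |H x| ≤ C₁)
    (hHhold : ∀ x y, |H x - H y| ≤ C₁ * ‖x - y‖ ^ γ)
    (hHgrad : ∀ x, ‖fderiv ℝ H x‖ ≤ C₁ * H x)
    (hHratio : ∀ x y, ‖x - y‖ < 1 → H x / H y ≤ C₁)
    (f : ℝ → ℝ) (hf_cont : ContinuousOn f (Set.Ici 0))
    (hf_nonneg : ∀ t : ℝ, 0 ≤ t → 0 ≤ f t)
    (p μ C : ℝ) (hp1 : 1 < p) (hp2 : p < ((n : ℝ) + 2 * s) / ((n : ℝ) - 2 * s))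
    (hμ0 : 0 < μ) (hμ : μ ≤ p - 1) (hC : 0 < C)
    (hf_mono : ∀ r t : ℝ, 0 < r → r ≤ t →
      f t * t ^ (-(((n : ℝ) + 2 * s) / ((n : ℝ) - 2 * s))) ≤
        f r * r ^ (-(((n : ℝ) + 2 * s) / ((n : ℝ) - 2 * s))))
    (hf_pos : ∀ t : ℝ, 0 < t →
      0 < f t * t ^ (-(((n : ℝ) + 2 * s) / ((n : ℝ) - 2 * s))))
    (hf_lip : ∀ r t : ℝ, 0 ≤ r → r < t →
      |f t - f r| ≤ C * (t ^ μ + t ^ (p - 1)) * (t - r))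
    (v : EuclideanSpace ℝ (Fin n) → ℝ) (hv0 : ∀ x, 0 ≤ v x)
    (Kv : ℝ) (hvbd : ∀ x, |v x| ≤ Kv)
    (hvhold : ∀ x y, |v x - v y| ≤ Kv * ‖x - y‖ ^ γ) :
    ∃ C' : ℝ, 0 < C' ∧
      (∀ x, |H x ^ (((n : ℝ) + 2 * s) / ((n : ℝ) - 2 * s)) * f (v x / H x)| ≤ C') ∧
      (∀ x y,
        |H x ^ (((n : ℝ) + 2 * s) / ((n : ℝ) - 2 * s)) * f (v x / H x) -
            H y ^ (((n : ℝ) + 2 * s) / ((n : ℝ) - 2 * s)) * f (v y / H y)| ≤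
          C' * ‖x - y‖ ^ γ) := by
  have hden : (0:ℝ) < (n : ℝ) - 2 * s := by linarith
  set q : ℝ := ((n : ℝ) + 2 * s) / ((n : ℝ) - 2 * s) with hqdef
  have hq1 : 1 < q := (one_lt_div hden).mpr (by linarith)
  have hq0 : 0 < q := by linarith
  have hpq : p < q := hp2
  have hC₁1 : (1:ℝ) ≤ C₁ := by
    have h := hHratio 0 0 (by simp)
    rwa [div_self (hHpos 0).ne'] at h
  have hKv0 : (0:ℝ) ≤ Kv := le_trans (abs_nonneg _) (hvbd 0)
  -- sup of f on [0,1]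
  obtain ⟨t₀, ht₀, hM₀⟩ := isCompact_Icc.exists_isMaxOn (Set.nonempty_Icc.mpr zero_le_one)
    (hf_cont.mono (fun z hz => hz.1))
  set M : ℝ := f t₀ + 1 with hMdef
  have hM0 : 0 < M := by have := hf_nonneg t₀ ht₀.1; simp only [hMdef]; linarith
  have hfM : ∀ t ∈ Set.Icc (0:ℝ) 1, f t ≤ M := fun t ht => le_trans (hM₀ ht) (by rw [hMdef]; linarith)
  -- growth bound on f
  have hgrow : ∀ t : ℝ, 0 ≤ t → f t ≤ M * (1 + t ^ q) := by
    intro t ht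
    have htq : (0:ℝ) ≤ t ^ q := Real.rpow_nonneg ht q
    rcases le_or_gt t 1 with h | h
    · have h1 := hfM t ⟨ht, h⟩
      nlinarith
    · have ht0 : (0:ℝ) < t := lt_trans zero_lt_one h
      have hmono := hf_mono 1 t one_pos h.le
      rw [Real.one_rpow, mul_one] at hmono
      have h2 := mul_le_mul_of_nonneg_right hmono htq
      rw [mul_assoc, ← Real.rpow_add ht0, neg_add_cancel, Real.rpow_zero, mul_one] at h2
      have hf1 : f 1 ≤ M := hfM 1 ⟨zero_le_one, le_refl 1⟩
      nlinarith
  -- global pointwise bound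
  set B : ℝ := M * (C₁ ^ q + Kv ^ q) with hBdef
  have hB0 : 0 < B := by
    have : (0:ℝ) < C₁ ^ q := Real.rpow_pos_of_pos hC₁ q
    have : (0:ℝ) ≤ Kv ^ q := Real.rpow_nonneg hKv0 q
    positivity
  have hgbd : ∀ x, |H x ^ q * f (v x / H x)| ≤ B := by
    intro x
    have hHx := hHpos x
    have ht0 : 0 ≤ v x / H x := div_nonneg (hv0 x) hHx.le
    have hfx0 : 0 ≤ f (v x / H x) := hf_nonneg _ ht0
    have hHq : (0:ℝ) < H x ^ q := Real.rpow_pos_of_pos hHx q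
    rw [abs_of_nonneg (by positivity)]
    calc H x ^ q * f (v x / H x) ≤ H x ^ q * (M * (1 + (v x / H x) ^ q)) := by
          exact mul_le_mul_of_nonneg_left (hgrow _ ht0) hHq.le
      _ = M * (H x ^ q + (v x) ^ q) := by
          rw [Real.div_rpow (hv0 x) hHx.le]; field_simp
      _ ≤ B := by
          have h1 : H x ^ q ≤ C₁ ^ q :=
            Real.rpow_le_rpow hHx.le (le_trans (le_abs_self _) (hHbd x)) hq0.le
          have h2 : (v x) ^ q ≤ Kv ^ q :=
            Real.rpow_le_rpow (hv0 x) (le_trans (le_abs_self _) (hvbd x)) hq0.le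
          rw [hBdef]; nlinarith
  -- mean value estimate for H at close points
  have hH_lip : ∀ x y : EuclideanSpace ℝ (Fin n), ‖x - y‖ < 1 →
      |H x - H y| ≤ C₁ * C₁ * H y * ‖x - y‖ := by
    intro x y hxy
    have hconv : Convex ℝ (Metric.ball y 1) := convex_ball y 1
    have hdiff : ∀ z ∈ Metric.ball y 1, DifferentiableAt ℝ H z :=
      fun z _ => hHdiff.differentiable one_ne_zero z
    have hbound : ∀ z ∈ Metric.ball y 1, ‖fderiv ℝ H z‖ ≤ C₁ * C₁ * H y := by
      intro z hz
      have hz1 : ‖z - y‖ < 1 := by rwa [Metric.mem_ball, dist_eq_norm] at hz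
      have hzle : H z ≤ C₁ * H y := (div_le_iff₀ (hHpos y)).mp (hHratio z y hz1)
      calc ‖fderiv ℝ H z‖ ≤ C₁ * H z := hHgrad z
        _ ≤ C₁ * (C₁ * H y) := by nlinarith [hHpos z]
        _ = C₁ * C₁ * H y := by ring
    have hmx : x ∈ Metric.ball y 1 := by rwa [Metric.mem_ball, dist_eq_norm]
    have hmy : y ∈ Metric.ball y 1 := Metric.mem_ball_self one_pos
    have := Convex.norm_image_sub_le_of_norm_fderiv_le hdiff hbound hconv hmy hmx
    simpa [Real.norm_eq_abs] using this
  -- Lipschitz bound valid also at equality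
  have hf_lip' : ∀ r t : ℝ, 0 ≤ r → r ≤ t →
      |f t - f r| ≤ C * (t ^ μ + t ^ (p - 1)) * (t - r) := by
    intro r t hr hrt
    rcases eq_or_lt_of_le hrt with rfl | h
    · simp
    · exact hf_lip r t hr h
  -- constants
  set A₁ : ℝ := q * C₁ ^ (q + 1) * (M * (C₁ ^ q + (C₁ * Kv) ^ q)) with hA₁def
  set A₂ : ℝ := C * (((C₁ * Kv) ^ μ + (C₁ * Kv) ^ (p - 1)) *
      ((1 + C₁ * C₁) * C₁ * Kv) * C₁ ^ q) with hA₂def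
  have hA₁0 : 0 ≤ A₁ := by
    have h1 : (0:ℝ) ≤ C₁ ^ (q+1) := (Real.rpow_pos_of_pos hC₁ _).le
    have h2 : (0:ℝ) ≤ C₁ ^ q := (Real.rpow_pos_of_pos hC₁ _).le
    have h3 : (0:ℝ) ≤ (C₁ * Kv) ^ q := Real.rpow_nonneg (by positivity) _
    positivity
  have hA₂0 : 0 ≤ A₂ := by
    have h1 : (0:ℝ) ≤ (C₁ * Kv) ^ μ := Real.rpow_nonneg (by positivity) _
    have h2 : (0:ℝ) ≤ (C₁ * Kv) ^ (p-1) := Real.rpow_nonneg (by positivity) _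
    have h3 : (0:ℝ) ≤ C₁ ^ q := (Real.rpow_pos_of_pos hC₁ _).le
    positivity
  -- the key local estimate
  have key : ∀ x y : EuclideanSpace ℝ (Fin n), ‖x - y‖ < 1 → v y / H y ≤ v x / H x →
      |H x ^ q * f (v x / H x) - H y ^ q * f (v y / H y)| ≤ (A₁ + A₂) * ‖x - y‖ ^ γ := by
    intro x y hxy hord
    rcases eq_or_ne x y with rfl | hne
    · simp [Real.zero_rpow hγ0.ne']
    have hd0 : 0 < ‖x - y‖ := by rw [norm_pos_iff]; exact sub_ne_zero_of_ne hne
    have hv := hvhold x y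
    have hHd1 := hH_lip x y hxy
    have hHd2 := hH_lip y x (by rwa [norm_sub_rev])
    rw [norm_sub_rev] at hHd2
    have hab : H x ≤ C₁ * H y := (div_le_iff₀ (hHpos y)).mp (hHratio x y hxy)
    have hba : H y ≤ C₁ * H x := (div_le_iff₀ (hHpos x)).mp (hHratio y x (by rwa [norm_sub_rev]))
    set d : ℝ := ‖x - y‖ with hddef
    set D : ℝ := d ^ γ with hDdef
    have hD0 : 0 < D := Real.rpow_pos_of_pos hd0 γ
    have hdD : d ≤ D := by
      have h := Real.rpow_le_rpow_of_exponent_ge hd0 hxy.le hγ1.le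
      rwa [Real.rpow_one] at h
    set a : ℝ := H x with hadef
    set b : ℝ := H y with hbdef
    have ha : 0 < a := hHpos x
    have hb : 0 < b := hHpos y
    set t : ℝ := v x / a with htdef
    set r : ℝ := v y / b with hrdef
    have ht0 : 0 ≤ t := div_nonneg (hv0 x) ha.le
    have hr0 : 0 ≤ r := div_nonneg (hv0 y) hb.le
    have hft0 : 0 ≤ f t := hf_nonneg _ ht0
    have hbq0 : (0:ℝ) ≤ b ^ q := (Real.rpow_pos_of_pos hb q).le
    have haC : a ≤ C₁ := le_trans (le_abs_self _) (hHbd x)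
    have hbC : b ≤ C₁ := le_trans (le_abs_self _) (hHbd y)
    have hvx : v x ≤ Kv := le_trans (le_abs_self _) (hvbd x)
    have hvy : v y ≤ Kv := le_trans (le_abs_self _) (hvbd y)
    -- |a - b| ≤ C₁ * C₁ * b * D
    have hHd : |a - b| ≤ C₁ * C₁ * b * D :=
      le_trans hHd1 (mul_le_mul_of_nonneg_left hdD (by positivity))
    have hHd' : |b - a| ≤ C₁ * C₁ * a * D :=
      le_trans hHd2 (mul_le_mul_of_nonneg_left hdD (by positivity))
    -- Term 1
    have hbCb : b ≤ C₁ * b := le_mul_of_one_le_left hb.le hC₁1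
    have habs : |a ^ q - b ^ q| ≤ q * (C₁ * b) ^ (q - 1) * |a - b| :=
      aux_abs_rpow_sub hq1.le ha hb hab hbCb
    have hbq : b ^ q = b ^ (q - 1) * b := by
      rw [← Real.rpow_add_one hb.ne' (q - 1)]; norm_num
    have hCq : C₁ ^ (q + 1) = C₁ ^ (q - 1) * C₁ * C₁ := by
      rw [show q + 1 = q - 1 + 1 + 1 by ring, Real.rpow_add_one hC₁.ne',
        Real.rpow_add_one hC₁.ne']
    have hfb : b ^ q * f t ≤ M * (C₁ ^ q + (C₁ * Kv) ^ q) := by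
      have hbt : b * t ≤ C₁ * Kv := by
        have e : b * t = b * v x / a := by rw [htdef]; ring
        rw [e, div_le_iff₀ ha]
        calc b * v x ≤ (C₁ * a) * v x := mul_le_mul_of_nonneg_right hba (hv0 x)
          _ ≤ (C₁ * a) * Kv := mul_le_mul_of_nonneg_left hvx (by positivity)
          _ = C₁ * Kv * a := by ring
      have hbt0 : 0 ≤ b * t := mul_nonneg hb.le ht0
      have h1 : b ^ q * f t ≤ b ^ q * (M * (1 + t ^ q)) :=
        mul_le_mul_of_nonneg_left (hgrow t ht0) hbq0
      have h2 : b ^ q * (M * (1 + t ^ q)) = M * (b ^ q + (b * t) ^ q) := by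
        rw [Real.mul_rpow hb.le ht0]; ring
      have h3 : (b * t) ^ q ≤ (C₁ * Kv) ^ q := Real.rpow_le_rpow hbt0 hbt hq0.le
      have h4 : b ^ q ≤ C₁ ^ q := Real.rpow_le_rpow hb.le hbC hq0.le
      calc b ^ q * f t ≤ M * (b ^ q + (b * t) ^ q) := by rw [← h2]; exact h1
        _ ≤ M * (C₁ ^ q + (C₁ * Kv) ^ q) := by
            apply mul_le_mul_of_nonneg_left _ hM0.le
            linarith
    have term1 : |a ^ q - b ^ q| * f t ≤ A₁ * D := by
      have step1 : |a ^ q - b ^ q| ≤ q * (C₁ * b) ^ (q - 1) * (C₁ * C₁ * b * D) :=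
        le_trans habs (mul_le_mul_of_nonneg_left hHd
          (by positivity))
      calc |a ^ q - b ^ q| * f t
          ≤ (q * (C₁ * b) ^ (q - 1) * (C₁ * C₁ * b * D)) * f t :=
            mul_le_mul_of_nonneg_right step1 hft0
        _ = (q * C₁ ^ (q + 1) * D) * (b ^ q * f t) := by
            rw [Real.mul_rpow hC₁.le hb.le, hCq, hbq]; ring
        _ ≤ (q * C₁ ^ (q + 1) * D) * (M * (C₁ ^ q + (C₁ * Kv) ^ q)) :=
            mul_le_mul_of_nonneg_left hfb
              (by have := (Real.rpow_pos_of_pos hC₁ (q + 1)).le; positivity)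
        _ = A₁ * D := by rw [hA₁def]; ring
    -- Term 2
    have ht_le : t ≤ C₁ * Kv / b := by
      rw [htdef, div_le_div_iff₀ ha hb]
      calc v x * b ≤ v x * (C₁ * a) := mul_le_mul_of_nonneg_left hba (hv0 x)
        _ ≤ Kv * (C₁ * a) := mul_le_mul_of_nonneg_right hvx (by positivity)
        _ = C₁ * Kv * a := by ring
    have htr_mul : (t - r) * b ≤ (1 + C₁ * C₁) * C₁ * Kv * D := by
      have e1 : (t - r) * b = (v x - v y) * b / a + v y * (b - a) / a := by
        rw [htdef, hrdef]; field_simp; ring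
      have h1 : (v x - v y) * b / a ≤ Kv * D * C₁ := by
        rw [div_le_iff₀ ha]
        calc (v x - v y) * b ≤ (Kv * D) * b :=
              mul_le_mul_of_nonneg_right (le_trans (le_abs_self _) hv) hb.le
          _ ≤ (Kv * D) * (C₁ * a) := mul_le_mul_of_nonneg_left hba (by positivity)
          _ = Kv * D * C₁ * a := by ring
      have h2 : v y * (b - a) / a ≤ Kv * (C₁ * C₁) * D := by
        rw [div_le_iff₀ ha]
        calc v y * (b - a) ≤ |v y| * |b - a| := by
              rw [← abs_mul]; exact le_abs_self _
          _ ≤ Kv * (C₁ * C₁ * a * D) :=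
              mul_le_mul (hvbd y) hHd' (abs_nonneg _) hKv0
          _ = Kv * (C₁ * C₁) * D * a := by ring
      have hKD : (0:ℝ) ≤ Kv * D := by positivity
      have h3 : (0:ℝ) ≤ C₁ * C₁ * (C₁ - 1) * (Kv * D) :=
        mul_nonneg (mul_nonneg (by positivity) (by linarith)) hKD
      linarith [e1, h1, h2, h3]
    have htr0 : 0 ≤ t - r := sub_nonneg.mpr hord
    have inner : ∀ e : ℝ, 0 < e → e ≤ p - 1 →
        t ^ e * (t - r) * b ^ q ≤
          ((C₁ * Kv) ^ e * ((1 + C₁ * C₁) * C₁ * Kv) * C₁ ^ q) * D := by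
      intro e he0 hep
      have hCKe : (0:ℝ) ≤ (C₁ * Kv) ^ e := Real.rpow_nonneg (by positivity) e
      have h1 : t ^ e ≤ (C₁ * Kv) ^ e / b ^ e := by
        rw [← Real.div_rpow (by positivity) hb.le]
        exact Real.rpow_le_rpow ht0 ht_le he0.le
      have h2 : t - r ≤ ((1 + C₁ * C₁) * C₁ * Kv * D) / b := (le_div_iff₀ hb).mpr htr_mul
      have hbe : (0:ℝ) < b ^ e := Real.rpow_pos_of_pos hb e
      calc t ^ e * (t - r) * b ^ q
          ≤ ((C₁ * Kv) ^ e / b ^ e) * (((1 + C₁ * C₁) * C₁ * Kv * D) / b) * b ^ q := by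
            apply mul_le_mul_of_nonneg_right _ hbq0
            exact mul_le_mul h1 h2 htr0 (by positivity)
        _ = ((C₁ * Kv) ^ e * ((1 + C₁ * C₁) * C₁ * Kv) * D) * (b ^ q / (b ^ e * b)) := by
            ring
        _ = ((C₁ * Kv) ^ e * ((1 + C₁ * C₁) * C₁ * Kv) * D) * b ^ (q - (e + 1)) := by
            rw [← Real.rpow_add_one hb.ne' e, ← Real.rpow_sub hb]
        _ ≤ ((C₁ * Kv) ^ e * ((1 + C₁ * C₁) * C₁ * Kv) * D) * C₁ ^ q := by
            apply mul_le_mul_of_nonneg_left _ (by positivity)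
            calc b ^ (q - (e + 1)) ≤ C₁ ^ (q - (e + 1)) :=
                  Real.rpow_le_rpow hb.le hbC (by linarith)
              _ ≤ C₁ ^ q := Real.rpow_le_rpow_of_exponent_le hC₁1 (by linarith)
        _ = ((C₁ * Kv) ^ e * ((1 + C₁ * C₁) * C₁ * Kv) * C₁ ^ q) * D := by ring
    have term2 : b ^ q * |f t - f r| ≤ A₂ * D := by
      have hlip := hf_lip' r t hr0 hord
      calc b ^ q * |f t - f r|
          ≤ b ^ q * (C * (t ^ μ + t ^ (p - 1)) * (t - r)) :=
            mul_le_mul_of_nonneg_left hlip hbq0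
        _ = C * (t ^ μ * (t - r) * b ^ q + t ^ (p - 1) * (t - r) * b ^ q) := by ring
        _ ≤ C * ((((C₁ * Kv) ^ μ * ((1 + C₁ * C₁) * C₁ * Kv) * C₁ ^ q) * D) +
              (((C₁ * Kv) ^ (p - 1) * ((1 + C₁ * C₁) * C₁ * Kv) * C₁ ^ q) * D)) :=
            mul_le_mul_of_nonneg_left
              (add_le_add (inner μ hμ0 hμ) (inner (p - 1) (by linarith) le_rfl)) hC.le
        _ = A₂ * D := by rw [hA₂def]; ring
    -- assemble
    have hsplit : a ^ q * f t - b ^ q * f r =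
        (a ^ q - b ^ q) * f t + b ^ q * (f t - f r) := by ring
    calc |a ^ q * f t - b ^ q * f r|
        = |(a ^ q - b ^ q) * f t + b ^ q * (f t - f r)| := by rw [hsplit]
      _ ≤ |(a ^ q - b ^ q) * f t| + |b ^ q * (f t - f r)| := abs_add_le _ _
      _ = |a ^ q - b ^ q| * f t + b ^ q * |f t - f r| := by
          rw [abs_mul, abs_mul, abs_of_nonneg hft0, abs_of_nonneg hbq0]
      _ ≤ A₁ * D + A₂ * D := add_le_add term1 term2
      _ = (A₁ + A₂) * D := by ring
  -- conclusion
  refine ⟨2 * B + A₁ + A₂ + 1, by positivity, fun x => le_trans (hgbd x) (by linarith), ?_⟩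
  intro x y
  have hD0 : (0:ℝ) ≤ ‖x - y‖ ^ γ := Real.rpow_nonneg (norm_nonneg _) γ
  rcases lt_or_ge ‖x - y‖ 1 with hxy | hxy
  · have hmain : |H x ^ q * f (v x / H x) - H y ^ q * f (v y / H y)| ≤ (A₁ + A₂) * ‖x - y‖ ^ γ := by
      rcases le_total (v y / H y) (v x / H x) with h | h
      · exact key x y hxy h
      · have := key y x (by rwa [norm_sub_rev]) h
        rwa [abs_sub_comm, norm_sub_rev] at this
    calc |H x ^ q * f (v x / H x) - H y ^ q * f (v y / H y)| ≤ (A₁ + A₂) * ‖x - y‖ ^ γ := hmain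
      _ ≤ (2 * B + A₁ + A₂ + 1) * ‖x - y‖ ^ γ :=
          mul_le_mul_of_nonneg_right (by linarith) hD0
  · have hD1 : (1:ℝ) ≤ ‖x - y‖ ^ γ := Real.one_le_rpow hxy hγ0.le
    have h1 := hgbd x
    have h2 := hgbd y
    have h3 : |H x ^ q * f (v x / H x) - H y ^ q * f (v y / H y)| ≤ 2 * B := by
      have h4 := abs_sub (H x ^ q * f (v x / H x)) (H y ^ q * f (v y / H y))
      linarith
    calc |H x ^ q * f (v x / H x) - H y ^ q * f (v y / H y)| ≤ 2 * B := h3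
      _ = 2 * B * 1 := by ring
      _ ≤ (2 * B + A₁ + A₂ + 1) * ‖x - y‖ ^ γ :=
          mul_le_mul (by linarith) hD1 zero_le_one (by linarith)
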